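/- For the two-point distribution D on [0,1]×{0,1} putting probability 1/2 on (1/2 - ε, 1) and probability 1/2 on (1/2, 0), with 0 < ε ≤ 1/2, the smooth calibration error satisfies smCE(D) ≥ 3ε/4. -/
import Mathlib


open MeasureTheory

noncomputable section

/-- The real value of a boolean outcome. -/
def yval (b : Bool) : ℝ := if b then 1 else 0

/-- `Π` is an extension of the prediction-outcome distribution `D`: it is a probability
distribution of triples `(u, v, y)` whose `(v, y)`-marginal is `D`, with `u ∈ [0,1]`,
and `(u, y)` perfectly calibrated, i.e. `E[y | u] = u` (equivalently,
`E[(y - u) 1_{u ∈ S}] = 0` for every measurable `S`). -/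
def IsExtension (D : Measure (ℝ × Bool)) (π : Measure (ℝ × (ℝ × Bool))) : Prop :=
  IsProbabilityMeasure π ∧
  π.map Prod.snd = D ∧
  (∀ᵐ p ∂π, p.1 ∈ Set.Icc (0 : ℝ) 1) ∧
  ∀ S : Set ℝ, MeasurableSet S →
    (∫ p in {p : ℝ × (ℝ × Bool) | p.1 ∈ S}, yval p.2.2 ∂π) =
      ∫ p in {p : ℝ × (ℝ × Bool) | p.1 ∈ S}, p.1 ∂π

/-- The lower distance to calibration of a distribution `D` on `[0,1] × {0,1}`. -/
def dCE (D : Measure (ℝ × Bool)) : ℝ :=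
  sInf {r : ℝ | ∃ π : Measure (ℝ × (ℝ × Bool)), IsExtension D π ∧
    r = ∫ p, |p.1 - p.2.1| ∂π}

/-- The smooth calibration error of a distribution `D` on `[0,1] × {0,1}`:
the supremum over `1`-Lipschitz weight functions `w : [0,1] → [-1,1]` of
`|E[(y - v) w(v)]|`. -/
def smCE (D : Measure (ℝ × Bool)) : ℝ :=
  sSup {r : ℝ | ∃ w : ℝ → ℝ, LipschitzWith 1 w ∧ (∀ t : ℝ, w t ∈ Set.Icc (-1 : ℝ) 1) ∧
    r = |∫ p, (yval p.2 - p.1) * w p.1 ∂D|}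

/-- The two-point distribution putting probability `1/2` on `(1/2 - ε, 1)` and
probability `1/2` on `(1/2, 0)`. -/
def twoPoint (ε : ℝ) : Measure (ℝ × Bool) :=
  ENNReal.ofReal (1 / 2) • Measure.dirac (1 / 2 - ε, true) +
    ENNReal.ofReal (1 / 2) • Measure.dirac (1 / 2, false)

lemma integrable_dirac_aux (f : ℝ × Bool → ℝ) (p : ℝ × Bool) :
    Integrable f (Measure.dirac p) := by
  have h : f =ᵐ[Measure.dirac p] fun _ => f p := by
    rw [MeasureTheory.ae_dirac_eq]; exact Filter.eventually_pure.2 rfl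
  exact (integrable_const (f p)).congr h.symm

lemma twoPoint_integral (ε : ℝ) (f : ℝ × Bool → ℝ) :
    ∫ p, f p ∂(twoPoint ε) =
      (1 / 2) * f (1 / 2 - ε, true) + (1 / 2) * f (1 / 2, false) := by
  have h1 : Integrable f (ENNReal.ofReal (1 / 2) • Measure.dirac ((1:ℝ) / 2 - ε, true)) :=
    (integrable_dirac_aux f _).smul_measure (by simp)
  have h2 : Integrable f (ENNReal.ofReal (1 / 2) • Measure.dirac ((1:ℝ) / 2, false)) :=
    (integrable_dirac_aux f _).smul_measure (by simp)
  rw [twoPoint, integral_add_measure h1 h2, integral_smul_measure, integral_smul_measure,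
    integral_dirac, integral_dirac]
  rw [ENNReal.toReal_ofReal (by norm_num)]
  simp [smul_eq_mul]

theorem stmt4 (ε : ℝ) (h0 : 0 < ε) (h1 : ε ≤ 1 / 2) :
    3 * ε / 4 ≤ smCE (twoPoint ε) := by
  set w : ℝ → ℝ := fun t => min 1 (max (1 - ε) (3 / 2 - ε - t)) with hw
  have hlip : LipschitzWith 1 w := by
    have : LipschitzWith 1 (fun t : ℝ => 3 / 2 - ε - t) := by
      have : Isometry (fun t : ℝ => 3 / 2 - ε - t) :=
        Isometry.of_dist_eq (fun x y => by simp [Real.dist_eq, abs_sub_comm]; ring_nf)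
      exact this.lipschitz
    exact (this.const_max _).const_min _
  have hmem : ∀ t : ℝ, w t ∈ Set.Icc (-1 : ℝ) 1 := by
    intro t
    constructor
    · have : (1 : ℝ) - ε ≤ max (1 - ε) (3 / 2 - ε - t) := le_max_left _ _
      have h' : (-1 : ℝ) ≤ 1 - ε := by linarith
      simp only [hw, le_min_iff]
      constructor <;> [linarith; linarith [le_max_left (1 - ε) (3 / 2 - ε - t)]]
    · exact min_le_left _ _
  have hw1 : w (1 / 2 - ε) = 1 := by
    simp only [hw]
    have : (3:ℝ) / 2 - ε - (1 / 2 - ε) = 1 := by ring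
    rw [this, max_eq_right (by linarith), min_self]
  have hw2 : w (1 / 2) = 1 - ε := by
    simp only [hw]
    have : (3:ℝ) / 2 - ε - 1 / 2 = 1 - ε := by ring
    rw [this, max_self, min_eq_right (by linarith)]
  have hint : ∫ p, (yval p.2 - p.1) * w p.1 ∂(twoPoint ε) = 3 * ε / 4 := by
    rw [twoPoint_integral ε (fun p => (yval p.2 - p.1) * w p.1)]
    simp only [yval, hw1, hw2]
    norm_num
    ring
  have hmem' : 3 * ε / 4 ∈ {r : ℝ | ∃ w : ℝ → ℝ, LipschitzWith 1 w ∧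
      (∀ t : ℝ, w t ∈ Set.Icc (-1 : ℝ) 1) ∧
      r = |∫ p, (yval p.2 - p.1) * w p.1 ∂(twoPoint ε)|} := by
    exact ⟨w, hlip, hmem, by rw [hint]; rw [abs_of_nonneg (by linarith)]⟩
  have hbdd : BddAbove {r : ℝ | ∃ w : ℝ → ℝ, LipschitzWith 1 w ∧
      (∀ t : ℝ, w t ∈ Set.Icc (-1 : ℝ) 1) ∧
      r = |∫ p, (yval p.2 - p.1) * w p.1 ∂(twoPoint ε)|} := by
    refine ⟨2, ?_⟩
    rintro r ⟨v, hv, hvb, rfl⟩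
    rw [twoPoint_integral ε (fun p => (yval p.2 - p.1) * v p.1)]
    have b1 := hvb (1 / 2 - ε)
    have b2 := hvb (1 / 2)
    simp only [Set.mem_Icc] at b1 b2
    simp only [yval]
    norm_num
    have e1 : |(1 / 2 : ℝ) * ((1 - (1 / 2 - ε)) * v (1 / 2 - ε))| ≤ 1 := by
      rw [abs_mul, abs_mul]
      have : |(1 : ℝ) - (1 / 2 - ε)| ≤ 1 := by rw [abs_le]; constructor <;> linarith
      have hv1 : |v (1 / 2 - ε)| ≤ 1 := abs_le.2 b1
      calc |(1/2 : ℝ)| * (|1 - (1/2 - ε)| * |v (1/2 - ε)|)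
          ≤ |(1/2 : ℝ)| * (1 * 1) := by
            apply mul_le_mul_of_nonneg_left _ (abs_nonneg _)
            exact mul_le_mul this hv1 (abs_nonneg _) zero_le_one
        _ ≤ 1 := by rw [abs_of_nonneg]; norm_num; norm_num
    have e2 : |(1 / 2 : ℝ) * (1 / 2 * v (1 / 2))| ≤ 1 := by
      rw [abs_mul, abs_mul]
      have : |(1 / 2 : ℝ)| ≤ 1 := by rw [abs_le]; constructor <;> linarith
      have hv2 : |v (1 / 2)| ≤ 1 := abs_le.2 b2
      calc |(1/2 : ℝ)| * (|(1/2 : ℝ)| * |v (1/2)|)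
          ≤ 1 * (1 * 1) := by
            apply mul_le_mul this _ (mul_nonneg (abs_nonneg _) (abs_nonneg _)) zero_le_one
            exact mul_le_mul this hv2 (abs_nonneg _) zero_le_one
        _ ≤ 1 := by norm_num
    rw [← sub_eq_add_neg]
    calc |(1/2 : ℝ) * ((1 - (1/2 - ε)) * v (1/2 - ε)) - 1/2 * (1/2 * v (1/2))|
        ≤ |(1/2 : ℝ) * ((1 - (1/2 - ε)) * v (1/2 - ε))| + |(1/2 : ℝ) * (1/2 * v (1/2))| :=
          abs_sub _ _
      _ ≤ 2 := by linarith
  exact le_csSup hbdd hmem'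

end
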